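/- Let $X$ be a real-valued random variable in $L^1$ with continuous cumulative distribution function, and let $\lambda \in (0,1)$. Then $\mathrm{CVaR}_\lambda(X) := \mathbb{E}[X \mid X \geq \mathrm{VaR}_\lambda(X)]$ satisfies the Rockafellar–Uryasev formula $\mathrm{CVaR}_\lambda(X) = \inf_{t \in \mathbb{R}}\left\{ t + \frac{1}{1-\lambda}\mathbb{E}[(X - t)^+] \right\}$, and the infimum is attained at $t = \mathrm{VaR}_\lambda(X)$. -/

import Mathlib

open MeasureTheory Filter Topology

private lemma ru_pointwise (s t x : ℝ) :
    max (x - s) 0 - (t - s) * (if s ≤ x then (1:ℝ) else 0) ≤ max (x - t) 0 := by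
  by_cases h : s ≤ x
  · rw [if_pos h, mul_one, max_eq_left (by linarith : (0:ℝ) ≤ x - s)]
    have := le_max_left (x - t) (0:ℝ); linarith
  · rw [if_neg h, mul_zero, sub_zero, max_eq_right (by linarith [not_le.1 h] : x - s ≤ 0)]
    exact le_max_right _ _

/-- Rockafellar–Uryasev formula for the Conditional Value-at-Risk. -/
theorem rockafellar_uryasev_cvar
    {Ω : Type*} [MeasurableSpace Ω] (μ : Measure Ω) [IsProbabilityMeasure μ]
    (X : Ω → ℝ) (hXm : Measurable X) (hXi : Integrable X μ)
    (hcdf : Continuous fun t : ℝ => (μ {ω | X ω ≤ t}).toReal)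
    (lam : ℝ) (hlam : lam ∈ Set.Ioo (0 : ℝ) 1)
    (VaR : ℝ) (hVaR : VaR = sInf {t : ℝ | lam ≤ (μ {ω | X ω ≤ t}).toReal})
    (CVaR : ℝ)
    (hCVaR : CVaR = (∫ ω in {ω | VaR ≤ X ω}, X ω ∂μ) / (μ {ω | VaR ≤ X ω}).toReal) :
    CVaR = ⨅ t : ℝ, (t + (1 / (1 - lam)) * ∫ ω, max (X ω - t) 0 ∂μ) ∧
    VaR + (1 / (1 - lam)) * (∫ ω, max (X ω - VaR) 0 ∂μ)
      = ⨅ t : ℝ, (t + (1 / (1 - lam)) * ∫ ω, max (X ω - t) 0 ∂μ) := by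
  haveI : IsProbabilityMeasure (μ.map X) := Measure.isProbabilityMeasure_map hXm.aemeasurable
  set F : ℝ → ℝ := fun t => (μ {ω | X ω ≤ t}).toReal with hF
  set S : Set ℝ := {t : ℝ | lam ≤ F t} with hS
  have hlam0 := hlam.1
  have hlam1 := hlam.2
  have hlamne : (1 : ℝ) - lam ≠ 0 := by linarith
  have hlampos : (0 : ℝ) < 1 - lam := by linarith
  -- F equals cdf of pushforward
  have hmap : ∀ t : ℝ, (μ.map X) (Set.Iic t) = μ {ω | X ω ≤ t} := by
    intro t
    rw [Measure.map_apply hXm measurableSet_Iic]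
    rfl
  have hFc : ∀ t : ℝ, F t = ProbabilityTheory.cdf (μ.map X) t := by
    intro t
    rw [ProbabilityTheory.cdf_eq_real, measureReal_def, hmap]
  -- limits of F
  have hFtop : Tendsto F atTop (𝓝 1) :=
    (ProbabilityTheory.tendsto_cdf_atTop (μ.map X)).congr fun t => (hFc t).symm
  have hFbot : Tendsto F atBot (𝓝 0) :=
    (ProbabilityTheory.tendsto_cdf_atBot (μ.map X)).congr fun t => (hFc t).symm
  -- S is closed, nonempty, bounded below
  have hSclosed : IsClosed S := isClosed_le continuous_const hcdf
  have hSne : S.Nonempty := by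
    obtain ⟨t, ht⟩ := (hFtop.eventually (eventually_gt_nhds hlam1)).exists
    exact ⟨t, ht.le⟩
  have hSbdd : BddBelow S := by
    obtain ⟨t0, ht0⟩ := eventually_atBot.1 (hFbot.eventually (eventually_lt_nhds hlam0))
    refine ⟨t0, fun s hs => ?_⟩
    by_contra hc
    exact absurd hs (not_le.2 (ht0 s (le_of_lt (not_le.1 hc))))
  have hVaRS : VaR ∈ S := hVaR ▸ hSclosed.csInf_mem hSne hSbdd
  -- F VaR = lam
  have hFVaR : F VaR = lam := by
    refine le_antisymm ?_ hVaRS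
    set u : ℕ → ℝ := fun n => VaR - 1 / (n + 1) with hu
    have hulim : Tendsto u atTop (𝓝 VaR) := by
      rw [hu]
      have h2 : Tendsto (fun n : ℕ => VaR - 1 / (n + 1)) atTop (𝓝 (VaR - 0)) :=
        tendsto_const_nhds.sub tendsto_one_div_add_atTop_nhds_zero_nat
      simpa using h2
    have hFu : ∀ n : ℕ, F (u n) ≤ lam := by
      intro n
      have hlt : u n < VaR := by
        have : (0:ℝ) < 1 / (n + 1) := by positivity
        simp only [hu]; linarith
      by_contra hc
      have : u n ∈ S := le_of_lt (not_le.1 hc)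
      have := hVaR ▸ csInf_le hSbdd this
      linarith
    exact le_of_tendsto ((hcdf.continuousAt.tendsto.comp hulim)) (Eventually.of_forall hFu)
  -- measure of {VaR ≤ X} is 1 - lam
  have hstrict : (μ {ω | X ω < VaR}).toReal = lam := by
    set u : ℕ → ℝ := fun n => VaR - 1 / (n + 1) with hu
    have hulim : Tendsto u atTop (𝓝 VaR) := by
      rw [hu]
      have h2 : Tendsto (fun n : ℕ => VaR - 1 / (n + 1)) atTop (𝓝 (VaR - 0)) :=
        tendsto_const_nhds.sub tendsto_one_div_add_atTop_nhds_zero_nat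
      simpa using h2
    have hmono : Monotone (fun n : ℕ => {ω | X ω ≤ u n}) := by
      intro m n hmn ω hω
      have : u m ≤ u n := by
        simp only [hu]
        have : (1:ℝ) / (n + 1) ≤ 1 / (m + 1) := by
          apply one_div_le_one_div_of_le (by positivity)
          have := (Nat.cast_le (α := ℝ)).2 hmn; linarith
        linarith
      exact le_trans hω this
    have hunion : (⋃ n : ℕ, {ω | X ω ≤ u n}) = {ω | X ω < VaR} := by
      ext ω
      simp only [Set.mem_iUnion, Set.mem_setOf_eq]
      constructor
      · rintro ⟨n, hn⟩
        have : (0:ℝ) < 1 / (n + 1) := by positivity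
        simp only [hu] at hn; linarith
      · intro hω
        obtain ⟨n, hn⟩ := exists_nat_one_div_lt (by linarith : (0:ℝ) < VaR - X ω)
        exact ⟨n, by simp only [hu]; linarith⟩
    have h1 : Tendsto (fun n : ℕ => μ {ω | X ω ≤ u n}) atTop (𝓝 (μ {ω | X ω < VaR})) := by
      have := tendsto_measure_iUnion_atTop (μ := μ) hmono
      rwa [hunion] at this
    have h2 : Tendsto (fun n : ℕ => F (u n)) atTop (𝓝 ((μ {ω | X ω < VaR}).toReal)) :=
      (ENNReal.tendsto_toReal (measure_ne_top μ _)).comp h1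
    have h3 : Tendsto (fun n : ℕ => F (u n)) atTop (𝓝 (F VaR)) :=
      hcdf.continuousAt.tendsto.comp hulim
    rw [← hFVaR]
    exact tendsto_nhds_unique h2 h3
  have hcompl : {ω | VaR ≤ X ω} = {ω | X ω < VaR}ᶜ := by
    ext ω; simp [not_lt]
  have hμge : (μ {ω | VaR ≤ X ω}).toReal = 1 - lam := by
    rw [hcompl, measure_compl (show MeasurableSet {ω | X ω < VaR} from hXm measurableSet_Iio) (measure_ne_top μ _),
      measure_univ, ENNReal.toReal_sub_of_le prob_le_one ENNReal.one_ne_top,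
      ENNReal.toReal_one, hstrict]
  -- integral of positive part
  have hmeas : ∀ t : ℝ, MeasurableSet {ω | t ≤ X ω} := fun t => hXm measurableSet_Ici
  have hindeq : ∀ t : ℝ, ∀ ω, max (X ω - t) 0 = ({ω | t ≤ X ω}).indicator (fun ω => X ω - t) ω := by
    intro t ω
    by_cases h : t ≤ X ω
    · rw [Set.indicator_of_mem (show ω ∈ {ω | t ≤ X ω} from h), max_eq_left (by linarith)]
    · rw [Set.indicator_of_notMem (show ω ∉ {ω | t ≤ X ω} from h),
        max_eq_right (by linarith [not_le.1 h])]
  have hint : ∀ t : ℝ, Integrable (fun ω => max (X ω - t) 0) μ :=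
    fun t => (hXi.sub (integrable_const t)).pos_part
  have hA : ∀ t : ℝ, (∫ ω, max (X ω - t) 0 ∂μ)
      = (∫ ω in {ω | t ≤ X ω}, X ω ∂μ) - t * (μ {ω | t ≤ X ω}).toReal := by
    intro t
    rw [integral_congr_ae (Eventually.of_forall (hindeq t)), integral_indicator (hmeas t),
      integral_sub hXi.integrableOn (integrableOn_const (measure_ne_top μ _)),
      setIntegral_const, measureReal_def, smul_eq_mul, mul_comm]
  -- key inequality: g VaR ≤ g t
  have hkey : ∀ t : ℝ, VaR + (1 / (1 - lam)) * (∫ ω, max (X ω - VaR) 0 ∂μ)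
      ≤ t + (1 / (1 - lam)) * ∫ ω, max (X ω - t) 0 ∂μ := by
    intro t
    have hind : Integrable (fun ω => (t - VaR) * ({ω | VaR ≤ X ω}).indicator (fun _ => (1:ℝ)) ω) μ := by
      exact (((integrable_const (1:ℝ)).indicator (hmeas VaR))).const_mul _
    have hle : ∫ ω, (max (X ω - VaR) 0 - (t - VaR) * ({ω | VaR ≤ X ω}).indicator (fun _ => (1:ℝ)) ω) ∂μ
        ≤ ∫ ω, max (X ω - t) 0 ∂μ := by
      apply integral_mono ((hint VaR).sub hind) (hint t)
      intro ω
      have := ru_pointwise VaR t (X ω)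
      simpa [Set.indicator_apply] using this
    rw [integral_sub (hint VaR) hind, integral_const_mul, integral_indicator (hmeas VaR),
      setIntegral_const, measureReal_def, smul_eq_mul, mul_one, hμge] at hle
    have h2 : (1 / (1 - lam)) * (∫ ω, max (X ω - VaR) 0 ∂μ - (t - VaR) * (1 - lam))
        ≤ (1 / (1 - lam)) * ∫ ω, max (X ω - t) 0 ∂μ :=
      mul_le_mul_of_nonneg_left hle (by positivity)
    have h3 : (1 / (1 - lam)) * ((t - VaR) * (1 - lam)) = t - VaR := by
      field_simp
    rw [mul_sub, h3] at h2
    linarith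
  -- the infimum equals g VaR
  have hinf : (⨅ t : ℝ, (t + (1 / (1 - lam)) * ∫ ω, max (X ω - t) 0 ∂μ))
      = VaR + (1 / (1 - lam)) * (∫ ω, max (X ω - VaR) 0 ∂μ) := by
    have hbdd : BddBelow (Set.range fun t : ℝ => t + (1 / (1 - lam)) * ∫ ω, max (X ω - t) 0 ∂μ) := by
      refine ⟨VaR + (1 / (1 - lam)) * ∫ ω, max (X ω - VaR) 0 ∂μ, ?_⟩
      rintro x ⟨t, rfl⟩
      exact hkey t
    exact le_antisymm (ciInf_le hbdd VaR) (le_ciInf hkey)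
  -- g VaR = CVaR
  have hgv : VaR + (1 / (1 - lam)) * (∫ ω, max (X ω - VaR) 0 ∂μ) = CVaR := by
    rw [hA VaR, hμge, hCVaR, hμge]
    field_simp
    ring
  exact ⟨by rw [hinf, hgv], by rw [hinf]⟩
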